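/- arXiv:2602.22135 — 10 statements merged into one kernel-verified Lean document; each statement's English description precedes it below -/
import Mathlib

section
/- A modality j forces a predicate P : A → Prop if and only if ◯_P ≤ j (pointwise: ∀ s, ◯_P s → j s). -/
def Oracle {A : Type*} (P : A → Prop) (s : Prop) : Prop :=
  ∀ r : Prop, (s → r) → (∀ a, (P a → r) → r) → r

theorem forces_iff_oracle_le {A : Type*} (P : A → Prop)
    (j : Prop → Prop)
    (mono : ∀ p q : Prop, (p → q) → (j p → j q))
    (infl : ∀ p : Prop, p → j p)
    (idem : ∀ p : Prop, j (j p) → j p) :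
    (∀ a : A, j (P a)) ↔ (∀ s : Prop, Oracle P s → j s) := by
  constructor
  · intro hf s hs
    exact hs (j s) (infl s) (fun a h => idem s (mono (P a) (j s) h (hf a)))
  · intro h a
    exact h (P a) (fun r hr hk => hk a hr)
end

section
/- For predicates P : A → Prop and Q : B → Prop, ◯_P ≤ ◯_Q if and only if ∀ a : A, ◯_Q (P a). -/
theorem oracle_le_iff {A B : Type*} (P : A → Prop) (Q : B → Prop) :
    (∀ s : Prop, Oracle P s → Oracle Q s) ↔ (∀ a : A, Oracle Q (P a)) := by
  constructor
  · intro h a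
    exact h (P a) (fun r hr hq => hq a hr)
  · intro h s hs r hr hq
    exact hs r hr (fun a hpa => h a r hpa hq)
end

section
/- The oracle modality of the excluded middle oracle is double negation: for the predicate lem : Prop → Prop defined by lem p := p ∨ ¬p, one has ◯_lem s ↔ ¬¬s for every proposition s. -/
theorem oracle_lem_eq_not_not :
    ∀ s : Prop, Oracle (fun p : Prop => p ∨ ¬ p) s ↔ ¬¬s := by
  intro s
  constructor
  · intro h hns
    exact h False hns (fun a k => k (Or.inr (fun ha => k (Or.inl ha))))
  · intro hnns r hs hr
    exact hr r (fun hc => hc.elim id (fun hnr => (hnns (fun h => hnr (hs h))).elim))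
end

section
/- For any predicate P : A → Prop, the oracle modality ◯_P is the least modality lying above the single-query map i_P, where i_P s := ∃ a : A, (P a → s). That is, i_P ≤ ◯_P pointwise, and for any modality j with i_P ≤ j one has ◯_P ≤ j. -/
def instQuery {A : Type*} (P : A → Prop) (s : Prop) : Prop :=
  ∃ a : A, (P a → s)

theorem oracle_least_above_instance {A : Type*} (P : A → Prop) :
    (∀ s : Prop, instQuery P s → Oracle P s) ∧
    (∀ j : Prop → Prop,
      (∀ p q : Prop, (p → q) → (j p → j q)) →
      (∀ p : Prop, p → j p) →
      (∀ p : Prop, j (j p) → j p) →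
      (∀ s : Prop, instQuery P s → j s) →
      (∀ s : Prop, Oracle P s → j s)) := by
  constructor
  · rintro s ⟨a, h⟩ r hs hq
    exact hq a fun pa => hs (h pa)
  · intro j mono pure idem hi s hs
    refine hs (j s) (pure s) fun a f => ?_
    exact idem s (mono (P a) (j s) f (hi (P a) ⟨a, id⟩))
end

section
/- The oracle modality construction is functorial on propositional containers: given a morphism of propositional containers from (A,P) to (B,Q), i.e., maps t : A → B and q : ∀ a, Q (t a) → P a, one has ◯_P ≤ ◯_Q. -/
theorem oracle_functorial {A B : Type*} (P : A → Prop) (Q : B → Prop)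
    (t : A → B) (q : ∀ a : A, Q (t a) → P a) :
    ∀ s : Prop, Oracle P s → Oracle Q s := by
  intro s h r hs hq
  exact h r hs (fun a k => hq (t a) (fun hQ => k (q a hQ)))
end

section
/- For a propositional container (A,P) and a modality j, there exists a container morphism from (A,P) to the container of j-dense propositions (with I_j(s,u) := s) if and only if ◯_P ≤ j. -/
theorem container_morphism_iff_oracle_le {A : Type*} (P : A → Prop)
    (j : Prop → Prop)
    (mono : ∀ p q : Prop, (p → q) → (j p → j q))
    (infl : ∀ p : Prop, p → j p)
    (idem : ∀ p : Prop, j (j p) → j p) :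
    (∃ t : A → { s : Prop // j s }, ∀ a : A, (t a).1 → P a) ↔
      (∀ s : Prop, Oracle P s → j s) := by
  constructor
  · rintro ⟨t, q⟩ s o
    exact o (j s) (infl s) fun a h =>
      idem s (mono (t a).1 (j s) (fun u => h (q a u)) (t a).2)
  · intro h
    exact ⟨fun a => ⟨P a, h (P a) (fun r f g => g a f)⟩, fun a => id⟩
end

section
/- Every modality is an oracle modality: for any modality j, j coincides with the oracle modality of its predicate of dense propositions, i.e., for all s : Prop, j s ↔ ◯_{I_j} s, where I_j : (Σ s : Prop, j s) → Prop is the first projection. -/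
theorem every_modality_is_oracle
    (j : Prop → Prop)
    (mono : ∀ p q : Prop, (p → q) → (j p → j q))
    (infl : ∀ p : Prop, p → j p)
    (idem : ∀ p : Prop, j (j p) → j p) :
    ∀ s : Prop, j s ↔ Oracle (fun d : { s : Prop // j s } => d.1) s := by
  intro s
  constructor
  · intro hs r f g
    exact g ⟨s, hs⟩ f
  · intro h
    exact h (j s) (infl s) (fun a k => idem s (mono a.1 (j s) k a.2))
end

section
/- Suprema of oracle modalities: for an I-indexed family of predicates P_i : A_i → Prop, the oracle modality of the sum predicate ΣP : (Σ i, A_i) → Prop, defined by ΣP (i,a) := P_i a, is the supremum of the family of modalities ◯_{P_i}: each ◯_{P_i} ≤ ◯_{ΣP}, and for any modality j, if ◯_{P_i} ≤ j for all i then ◯_{ΣP} ≤ j. -/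
theorem oracle_sup {I : Type*} {A : I → Type*} (P : ∀ i, A i → Prop) :
    (∀ i : I, ∀ s : Prop, Oracle (P i) s →
      Oracle (fun x : Σ i, A i => P x.1 x.2) s) ∧
    (∀ j : Prop → Prop,
      (∀ p q : Prop, (p → q) → (j p → j q)) →
      (∀ p : Prop, p → j p) →
      (∀ p : Prop, j (j p) → j p) →
      (∀ i : I, ∀ s : Prop, Oracle (P i) s → j s) →
      (∀ s : Prop, Oracle (fun x : Σ i, A i => P x.1 x.2) s → j s)) := by
  constructor
  · intro i s h r hs hg
    exact h r hs (fun a => hg ⟨i, a⟩)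
  · intro j jmono jpure jjoin hle s h
    refine h (j s) (jpure s) ?_
    rintro ⟨i, a⟩ hk
    have hja : j (P i a) := hle i (P i a) (fun r f g => g a f)
    exact jjoin s (jmono _ _ hk hja)
end

section
/- A type X is a P-oracle sheaf if and only if: (1) there is d : ∀ a : A, (P a → X) → X; (2) d a h = h u for all a, h : P a → X, u : P a; and (3) for all a : A and x y : X, if P a → x = y then x = y. Here 'X is a sheaf' means that for every ◯_P-dense proposition s (i.e., ◯_P s), the map X → (s → X) sending x to the constant function is an equivalence (bijection). -/
theorem oracle_sheaf_iff {A : Type*} (P : A → Prop) (X : Type*) :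
    (∀ s : Prop, Oracle P s →
      Function.Bijective (fun (x : X) (_ : s) => x)) ↔
    (∃ d : ∀ a : A, (P a → X) → X,
      (∀ a (h : P a → X) (u : P a), d a h = h u) ∧
      (∀ a : A, ∀ x y : X, (P a → x = y) → x = y)) := by
  constructor
  · intro hb
    have dense : ∀ a : A, Oracle P (P a) := fun a r f g => g a f
    have surj : ∀ a : A, ∀ h : P a → X, ∃ x : X, (fun _ : P a => x) = h :=
      fun a h => (hb (P a) (dense a)).2 h
    refine ⟨fun a h => Classical.choose (surj a h), ?_, ?_⟩
    · intro a h u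
      have := Classical.choose_spec (surj a h)
      exact congrFun this u
    · intro a x y hxy
      apply (hb (P a) (dense a)).1
      funext u
      exact hxy u
  · rintro ⟨d, hd, hsep⟩
    intro s hs
    constructor
    · intro x y hxy
      refine hs (x = y) (fun u => congrFun hxy u) (fun a g => hsep a x y g)
    · intro f
      refine hs (∃ x : X, (fun _ : s => x) = f) ?_ ?_
      · intro u
        exact ⟨f u, funext fun v => rfl⟩
      · intro a g
        set h : P a → X := fun u => Classical.choose (g u) with hh
        refine ⟨d a h, funext fun v => ?_⟩
        apply hsep a
        intro u
        have h1 : d a h = h u := hd a h u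
        have h2 : (fun _ : s => h u) = f := Classical.choose_spec (g u)
        rw [h1]
        exact congrFun h2 v
end

section
/- Every map between P-sheaves is a homomorphism of the structure maps: if X and Y are P-sheaves with structure maps d_X and d_Y, then for every f : X → Y, a : A, and h : P a → X, f (d_X a h) = d_Y a (f ∘ h). -/
theorem sheaf_maps_are_homomorphisms {A : Type*} (P : A → Prop)
    (X Y : Type*)
    (dX : ∀ a : A, (P a → X) → X)
    (hdX : ∀ a (h : P a → X) (u : P a), dX a h = h u)
    (heqX : ∀ a : A, ∀ x y : X, (P a → x = y) → x = y)
    (dY : ∀ a : A, (P a → Y) → Y)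
    (hdY : ∀ a (h : P a → Y) (u : P a), dY a h = h u)
    (heqY : ∀ a : A, ∀ x y : Y, (P a → x = y) → x = y)
    (f : X → Y) (a : A) (h : P a → X) :
    f (dX a h) = dY a (f ∘ h) := by
  apply heqY a
  intro u
  rw [hdX a h u, hdY a (f ∘ h) u]
  rfl
end
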